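/- Let T ∈ (0, ∞], a₀, R₀ > 0, and let a, R : [0, T) → ℝ be functions with a(0) = a₀, R(0) = R₀, R(t) > 0 and a(t) R(t)³ ≠ t for all t ∈ [0, T), such that for every t ∈ [0, T), a has derivative a′(t) = −8/R(t)³ and R has derivative R′(t) = 3R(t)/(a(t)R(t)³ − t). Then a(t) R(t)³ = √(a₀² R₀⁶ + 9t²) + t for all t ∈ [0, T); in particular a(t) > t/R(t)³ for all t ∈ [0, T). -/

import Mathlib

open scoped ENNReal

/-- First integral of the ODE system for the evolution of the characteristic function of a
disk under the fourth-order total variation flow in dimension `n = 2`: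
`a(t)R(t)³ = √(a₀²R₀⁶ + 9t²) + t`, and in particular `a(t) > t/R(t)³`.
Here `T ∈ (0,∞]` is encoded as `T : ℝ≥0∞` with `0 < T`, and the domain `[0,T)` is
`D = {t : ℝ | 0 ≤ t ∧ ofReal t < T}`. -/
theorem stmt_15 (T : ℝ≥0∞) (hT : 0 < T) (a0 R0 : ℝ) (ha0 : 0 < a0) (hR0 : 0 < R0)
    (D : Set ℝ) (hD : D = {t : ℝ | 0 ≤ t ∧ ENNReal.ofReal t < T})
    (a R : ℝ → ℝ) (hainit : a 0 = a0) (hRinit : R 0 = R0)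
    (hRpos : ∀ t ∈ D, 0 < R t) (hne : ∀ t ∈ D, a t * R t ^ 3 ≠ t)
    (ha : ∀ t ∈ D, HasDerivWithinAt a (-8 / R t ^ 3) D t)
    (hR : ∀ t ∈ D, HasDerivWithinAt R (3 * R t / (a t * R t ^ 3 - t)) D t) :
    ∀ t ∈ D, a t * R t ^ 3 = Real.sqrt (a0 ^ 2 * R0 ^ 6 + 9 * t ^ 2) + t ∧
      a t > t / R t ^ 3 := by
  -- D is convex
  have hDconv : Convex ℝ D := by
    rw [hD]
    apply Set.OrdConnected.convex
    constructor
    rintro x ⟨hx0, _⟩ y ⟨_, hyT⟩ z ⟨hxz, hzy⟩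
    exact ⟨le_trans hx0 hxz, lt_of_le_of_lt (ENNReal.ofReal_le_ofReal hzy) hyT⟩
  have h0D : (0 : ℝ) ∈ D := by
    rw [hD]; exact ⟨le_refl 0, by simpa using hT⟩
  have hDnonneg : ∀ t ∈ D, (0:ℝ) ≤ t := by
    intro t ht; rw [hD] at ht; exact ht.1
  -- the first integral function
  set F : ℝ → ℝ := fun t => a t * R t ^ 3 - t with hF
  set G : ℝ → ℝ := fun t => F t ^ 2 - 9 * t ^ 2 with hG
  have hFne : ∀ t ∈ D, F t ≠ 0 := by
    intro t ht
    simpa [hF, sub_ne_zero] using hne t ht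
  have hFderiv : ∀ t ∈ D, HasDerivWithinAt F (9 * t / F t) D t := by
    intro t ht
    have hR3 : R t ^ 3 ≠ 0 := by
      have := hRpos t ht; positivity
    have h1 : HasDerivWithinAt F
        ((-8 / R t ^ 3) * R t ^ 3 + a t * ((3:ℕ) * R t ^ 2 * (3 * R t / (a t * R t ^ 3 - t))) - 1)
        D t := by
      exact ((ha t ht).mul ((hR t ht).pow 3)).sub (hasDerivWithinAt_id t D)
    convert h1 using 1
    have hFt := hFne t ht
    simp only [hF] at hFt ⊢
    have hRt : R t ≠ 0 := (hRpos t ht).ne'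
    field_simp
    ring
  have hGderiv : ∀ t ∈ D, HasDerivWithinAt G 0 D t := by
    intro t ht
    have h1 : HasDerivWithinAt G
        ((2:ℕ) * F t ^ 1 * (9 * t / F t) - 9 * ((2:ℕ) * t ^ 1 * 1)) D t :=
      ((hFderiv t ht).pow 2).sub (((hasDerivWithinAt_id t D).pow 2).const_mul 9)
    convert h1 using 1
    have hFt := hFne t ht
    field_simp
    ring
  -- G is constant on D
  have hGconst : ∀ t ∈ D, G t = G 0 := by
    intro t ht
    have := hDconv.norm_image_sub_le_of_norm_hasDerivWithin_le (f := G) (f' := fun _ => 0)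
      (C := 0) hGderiv (fun x _ => by simp) h0D ht
    simp only [zero_mul, norm_le_zero_iff, sub_eq_zero] at this
    exact this
  have hG0 : G 0 = a0 ^ 2 * R0 ^ 6 := by
    simp only [hG, hF, hainit, hRinit]
    ring
  have hFsq : ∀ t ∈ D, F t ^ 2 = a0 ^ 2 * R0 ^ 6 + 9 * t ^ 2 := by
    intro t ht
    have := hGconst t ht
    rw [hG0] at this
    simp only [hG] at this
    linarith
  -- F is positive on D
  have hFcont : ContinuousOn F D := fun t ht => (hFderiv t ht).continuousWithinAt
  have hF0 : 0 < F 0 := by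
    simp only [hF, hainit, hRinit, sub_zero]
    positivity
  have hFpos : ∀ t ∈ D, 0 < F t := by
    intro t ht
    rcases lt_or_gt_of_ne (hFne t ht) with hlt | hgt
    · exfalso
      have hsub : Set.Icc (0:ℝ) t ⊆ D := hDconv.ordConnected.out h0D ht
      have h0t : (0:ℝ) ≤ t := hDnonneg t ht
      have := intermediate_value_Icc' h0t (hFcont.mono hsub)
      have h0mem : (0:ℝ) ∈ Set.Icc (F t) (F 0) := ⟨hlt.le, hF0.le⟩
      obtain ⟨s, hs, hFs⟩ := this h0mem
      exact hFne s (hsub hs) hFs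
    · exact hgt
  -- conclude
  intro t ht
  have hFt := hFpos t ht
  have hR3 : (0:ℝ) < R t ^ 3 := by
    have := hRpos t ht; positivity
  constructor
  · have : Real.sqrt (a0 ^ 2 * R0 ^ 6 + 9 * t ^ 2) = F t := by
      rw [← hFsq t ht, Real.sqrt_sq hFt.le]
    rw [this]
    simp [hF]
  · rw [gt_iff_lt, div_lt_iff₀ hR3]
    have : F t = a t * R t ^ 3 - t := rfl
    linarith
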